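/- Fix γ ∈ (1,2) and Φ_ℓ, Φ_r ∈ ℝ. For every integer n ≥ 2 there exists a unique function Φ_ss^n : Λ_n → ℝ such that for every x ∈ Λ_n, ∑_{y∈Λ_n} p(y−x)(Φ_ss^n(y) − Φ_ss^n(x)) + 1_{x=1}(Φ_ℓ − Φ_ss^n(1)) + 1_{x=n−1}(Φ_r − Φ_ss^n(n−1)) = 0. Moreover this unique solution satisfies min(Φ_ℓ, Φ_r) ≤ Φ_ss^n(x) ≤ max(Φ_ℓ, Φ_r) for every x ∈ Λ_n. -/
import Mathlib


open MeasureTheory Filter ENNReal NNReal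

noncomputable section

/-- The normalizing constant `c_γ = (∑_{z∈ℤ, z≠0} |z|^{-(1+γ)})⁻¹`. -/
def cGamma (γ : ℝ) : ℝ := (∑' z : ℤ, if z = 0 then (0:ℝ) else |(z : ℝ)| ^ (-(1 + γ)))⁻¹

/-- The long-range kernel `p(z) = c_γ |z|^{-(1+γ)}` for `z ≠ 0`, `p(0) = 0`. -/
def pker (γ : ℝ) (z : ℝ) : ℝ := if z = 0 then 0 else cGamma γ * |z| ^ (-(1 + γ))

/-- The fractional inner product `⟨F,G⟩_{γ/2}`. -/
def fracInner (γ : ℝ) (F G : ℝ → ℝ) : ℝ :=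
  (cGamma γ / 2) * ∫ u in Set.Icc (0:ℝ) 1, ∫ v in Set.Icc (0:ℝ) 1,
    (F u - F v) * (G u - G v) * |u - v| ^ (-(1 + γ))

/-- The squared fractional seminorm `‖F‖²_{γ/2}`, as an extended real number. -/
def fracSeminormSq (γ : ℝ) (F : ℝ → ℝ) : ℝ≥0∞ :=
  ∫⁻ u in Set.Icc (0:ℝ) 1, ∫⁻ v in Set.Icc (0:ℝ) 1,
    ENNReal.ofReal ((cGamma γ / 2) * (F u - F v) ^ 2 * |u - v| ^ (-(1 + γ)))

/-- The squared `L²` norm on `[0,1]`, as an extended real number. -/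
def l2NormSq (F : ℝ → ℝ) : ℝ≥0∞ :=
  ∫⁻ u in Set.Icc (0:ℝ) 1, ENNReal.ofReal ((F u) ^ 2)

/-- The squared fractional Sobolev norm `‖F‖²_{H^{γ/2}}`. -/
def sobNormSq (γ : ℝ) (F : ℝ → ℝ) : ℝ≥0∞ := l2NormSq F + fracSeminormSq γ F

/-- Membership in the fractional Sobolev space `H^{γ/2}`. -/
def MemHgamma (γ : ℝ) (F : ℝ → ℝ) : Prop := Measurable F ∧ sobNormSq γ F < ⊤

/-- `F` admits a continuous representative on `[0,1]` taking the values `a` at `0` and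
`b` at `1`. -/
def HasBoundaryValues (F : ℝ → ℝ) (a b : ℝ) : Prop :=
  ∃ Fc : ℝ → ℝ, ContinuousOn Fc (Set.Icc 0 1) ∧
    (∀ᵐ u ∂(volume.restrict (Set.Icc (0:ℝ) 1)), F u = Fc u) ∧ Fc 0 = a ∧ Fc 1 = b

/-- The regional fractional Laplacian on `[0,1]`, as a principal-value limit. -/
def HasFracLapAt (γ : ℝ) (F : ℝ → ℝ) (u L : ℝ) : Prop :=
  Tendsto (fun ε : ℝ =>
      cGamma γ * ∫ v in {v : ℝ | v ∈ Set.Icc (0:ℝ) 1 ∧ ε ≤ abs (u - v)},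
        (F v - F u) * |v - u| ^ (-(1 + γ)))
    (nhdsWithin (0:ℝ) (Set.Ioi 0)) (nhds L)

/-- The regional fractional Laplacian `𝕃^γ F(u)` (junk value `0` when the
principal-value limit does not exist). -/
def fracLap (γ : ℝ) (F : ℝ → ℝ) (u : ℝ) : ℝ :=
  open Classical in
  if h : ∃ L, HasFracLapAt γ F u L then h.choose else 0

/-- Smooth real functions with compact support contained in `(0,1)`. -/
def IsSpatialTest (G : ℝ → ℝ) : Prop :=
  ContDiff ℝ (⊤ : ℕ∞) G ∧ ∃ K : Set ℝ, IsCompact K ∧ K ⊆ Set.Ioo 0 1 ∧ Function.support G ⊆ K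

/-- Test functions `C¹` in time and `C^∞` in space, with spatial supports contained in a
fixed compact subset of `(0,1)`. -/
def IsTestCInf (G : ℝ → ℝ → ℝ) : Prop :=
  (∀ u, ContDiff ℝ 1 fun t => G t u) ∧ (∀ t, ContDiff ℝ (⊤ : ℕ∞) fun u => G t u) ∧
  ∃ K : Set ℝ, IsCompact K ∧ K ⊆ Set.Ioo 0 1 ∧ ∀ t, Function.support (G t) ⊆ K

/-- Functions `C¹` in time and `C²` in space, with spatial supports contained in a fixed
compact subset of `(0,1)`. -/
def IsTestC2 (G : ℝ → ℝ → ℝ) : Prop :=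
  (∀ u, ContDiff ℝ 1 fun t => G t u) ∧ (∀ t, ContDiff ℝ 2 fun u => G t u) ∧
  ∃ K : Set ℝ, IsCompact K ∧ K ⊆ Set.Ioo 0 1 ∧ ∀ t, Function.support (G t) ⊆ K

/-- The discrete stationary equation for the profile `ψ` on `Λ_n = {1, …, n−1}`. -/
def IsDiscreteProfile (γ Φl Φr : ℝ) (n : ℕ) (ψ : ℕ → ℝ) : Prop :=
  ∀ x ∈ Finset.Icc 1 (n - 1),
    (∑ y ∈ Finset.Icc 1 (n - 1), pker γ ((y : ℝ) - (x : ℝ)) * (ψ y - ψ x))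
      + (if x = 1 then Φl - ψ 1 else 0) + (if x = n - 1 then Φr - ψ (n - 1) else 0) = 0

lemma cGamma_pos {γ : ℝ} (hγ : 1 < γ) : 0 < cGamma γ := by
  have hsum : Summable (fun z : ℤ => |(z:ℝ)| ^ (-(1+γ))) :=
    Real.summable_abs_int_rpow (by linarith)
  have heq : (fun z : ℤ => if z = 0 then (0:ℝ) else |(z : ℝ)| ^ (-(1 + γ)))
      = fun z : ℤ => |(z:ℝ)| ^ (-(1+γ)) := by
    funext z
    split
    · subst ‹z = 0›
      simp only [Int.cast_zero, abs_zero]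
      rw [Real.zero_rpow (by intro h; nlinarith [h])]
    · rfl
  have h1 : (1:ℝ) ≤ ∑' z : ℤ, |(z:ℝ)| ^ (-(1+γ)) := by
    have := Summable.le_tsum hsum 1 (fun z _ => Real.rpow_nonneg (abs_nonneg _) _)
    simpa using this
  rw [cGamma, heq]
  exact inv_pos.2 (lt_of_lt_of_le one_pos h1)

lemma pker_nonneg {γ : ℝ} (hγ : 1 < γ) (z : ℝ) : 0 ≤ pker γ z := by
  rw [pker]; split
  · exact le_rfl
  · exact le_of_lt (mul_pos (cGamma_pos hγ) (Real.rpow_pos_of_pos (abs_pos.2 ‹z ≠ 0›) _))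

lemma pker_pos {γ : ℝ} (hγ : 1 < γ) {z : ℝ} (hz : z ≠ 0) : 0 < pker γ z := by
  rw [pker, if_neg hz]
  exact mul_pos (cGamma_pos hγ) (Real.rpow_pos_of_pos (abs_pos.2 hz) _)

lemma profile_le_max {γ : ℝ} (Φl Φr : ℝ) (hγ : 1 < γ) (n : ℕ) (hn : 2 ≤ n)
    (ψ : ℕ → ℝ) (hψ : IsDiscreteProfile γ Φl Φr n ψ) :
    ∀ x ∈ Finset.Icc 1 (n - 1), ψ x ≤ max Φl Φr := by
  set Λ := Finset.Icc 1 (n - 1) with hΛ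
  have h1 : 1 ∈ Λ := Finset.mem_Icc.2 ⟨le_rfl, by omega⟩
  obtain ⟨x₀, hx₀, hmax⟩ := Finset.exists_max_image Λ ψ ⟨1, h1⟩
  set M := ψ x₀ with hM
  intro x hx
  by_contra hcon
  push_neg at hcon
  have hMgt : max Φl Φr < M := lt_of_lt_of_le hcon (hmax x hx)
  -- key: no boundary point can achieve the max
  have key : ∀ z ∈ Λ, ψ z = M → (z = 1 ∨ z = n - 1) → False := by
    intro z hz hzM hbd
    have heq := hψ z hz
    have hS : (∑ y ∈ Λ, pker γ ((y : ℝ) - (z : ℝ)) * (ψ y - ψ z)) ≤ 0 := by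
      apply Finset.sum_nonpos
      intro y hy
      have := hmax y hy
      have := pker_nonneg hγ ((y : ℝ) - (z : ℝ))
      nlinarith [hmax y hy]
    have ht1 : (if z = 1 then Φl - ψ 1 else 0) ≤ 0 := by
      split
      · have : ψ 1 = M := by rw [← ‹z = 1›]; exact hzM
        rw [this]; have : Φl ≤ max Φl Φr := le_max_left _ _; linarith
      · exact le_rfl
    have ht2 : (if z = n - 1 then Φr - ψ (n - 1) else 0) ≤ 0 := by
      split
      · have : ψ (n - 1) = M := by rw [← ‹z = n - 1›]; exact hzM
        rw [this]; have : Φr ≤ max Φl Φr := le_max_right _ _; linarith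
      · exact le_rfl
    rcases hbd with h | h
    · have hlt : (if z = 1 then Φl - ψ 1 else 0) < 0 := by
        rw [if_pos h]
        have : ψ 1 = M := by rw [← h]; exact hzM
        rw [this]; have : Φl ≤ max Φl Φr := le_max_left _ _; linarith
      linarith
    · have hlt : (if z = n - 1 then Φr - ψ (n - 1) else 0) < 0 := by
        rw [if_pos h]
        have : ψ (n - 1) = M := by rw [← h]; exact hzM
        rw [this]; have : Φr ≤ max Φl Φr := le_max_right _ _; linarith
      linarith
  -- case analysis on x₀
  by_cases hb : x₀ = 1 ∨ x₀ = n - 1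
  · exact key x₀ hx₀ rfl hb
  · push_neg at hb
    have heq := hψ x₀ hx₀
    rw [if_neg hb.1, if_neg hb.2] at heq
    have hS0 : (∑ y ∈ Λ, pker γ ((y : ℝ) - (x₀ : ℝ)) * (ψ y - ψ x₀)) = 0 := by linarith
    have hterm : ∀ y ∈ Λ, pker γ ((y : ℝ) - (x₀ : ℝ)) * (ψ y - ψ x₀) = 0 := by
      rw [← Finset.sum_eq_zero_iff_of_nonpos]
      · exact hS0
      · intro y hy
        have := pker_nonneg hγ ((y : ℝ) - (x₀ : ℝ))
        nlinarith [hmax y hy]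
    have h1term := hterm 1 h1
    have hne : ((1 : ℕ) : ℝ) - (x₀ : ℝ) ≠ 0 := by
      intro h
      apply hb.1
      have : ((x₀ : ℕ) : ℝ) = ((1 : ℕ) : ℝ) := by push_cast at h ⊢; linarith
      exact_mod_cast this
    have hp := pker_pos hγ hne
    have hψ1 : ψ 1 = M := by
      rcases mul_eq_zero.1 h1term with h | h
      · exact absurd h (ne_of_gt hp)
      · linarith [sub_eq_zero.1 h]
    exact key 1 h1 hψ1 (Or.inl rfl)

lemma profile_neg {γ Φl Φr : ℝ} {n : ℕ} {ψ : ℕ → ℝ}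
    (hψ : IsDiscreteProfile γ Φl Φr n ψ) :
    IsDiscreteProfile γ (-Φl) (-Φr) n (fun m => -ψ m) := by
  intro x hx
  have h := hψ x hx
  have hsum : (∑ y ∈ Finset.Icc 1 (n - 1), pker γ ((y : ℝ) - (x : ℝ)) * ((-ψ y) - (-ψ x)))
      = -(∑ y ∈ Finset.Icc 1 (n - 1), pker γ ((y : ℝ) - (x : ℝ)) * (ψ y - ψ x)) := by
    rw [← Finset.sum_neg_distrib]
    exact Finset.sum_congr rfl (fun y _ => by ring)
  simp only
  rw [hsum]
  have h1 : (if x = 1 then -Φl - -ψ 1 else 0) = -(if x = 1 then Φl - ψ 1 else 0) := by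
    split <;> ring
  have h2 : (if x = n - 1 then -Φr - -ψ (n - 1) else 0)
      = -(if x = n - 1 then Φr - ψ (n - 1) else 0) := by
    split <;> ring
  rw [h1, h2]; linarith

lemma profile_ge_min {γ : ℝ} (Φl Φr : ℝ) (hγ : 1 < γ) (n : ℕ) (hn : 2 ≤ n)
    (ψ : ℕ → ℝ) (hψ : IsDiscreteProfile γ Φl Φr n ψ) :
    ∀ x ∈ Finset.Icc 1 (n - 1), min Φl Φr ≤ ψ x := by
  intro x hx
  have := profile_le_max (-Φl) (-Φr) hγ n hn _ (profile_neg hψ) x hx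
  simp only [max_neg_neg] at this  -- maybe wrong name
  linarith [this]

lemma profile_diff {γ Φl Φr : ℝ} {n : ℕ} {ψ ψ' : ℕ → ℝ}
    (h : IsDiscreteProfile γ Φl Φr n ψ) (h' : IsDiscreteProfile γ Φl Φr n ψ') :
    IsDiscreteProfile γ 0 0 n (ψ' - ψ) := by
  intro x hx
  have h1 := h x hx
  have h2 := h' x hx
  have hsum : (∑ y ∈ Finset.Icc 1 (n - 1),
        pker γ ((y : ℝ) - (x : ℝ)) * ((ψ' - ψ) y - (ψ' - ψ) x))
      = (∑ y ∈ Finset.Icc 1 (n - 1), pker γ ((y : ℝ) - (x : ℝ)) * (ψ' y - ψ' x))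
        - (∑ y ∈ Finset.Icc 1 (n - 1), pker γ ((y : ℝ) - (x : ℝ)) * (ψ y - ψ x)) := by
    rw [← Finset.sum_sub_distrib]
    exact Finset.sum_congr rfl (fun y _ => by simp [Pi.sub_apply]; ring)
  rw [hsum]
  have e1 : (if x = 1 then (0:ℝ) - (ψ' - ψ) 1 else 0)
      = (if x = 1 then Φl - ψ' 1 else 0) - (if x = 1 then Φl - ψ 1 else 0) := by
    split <;> simp [Pi.sub_apply] <;> ring
  have e2 : (if x = n - 1 then (0:ℝ) - (ψ' - ψ) (n - 1) else 0)
      = (if x = n - 1 then Φr - ψ' (n - 1) else 0)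
        - (if x = n - 1 then Φr - ψ (n - 1) else 0) := by
    split <;> simp [Pi.sub_apply] <;> ring
  rw [e1, e2]; linarith

lemma profile_zero_eq_zero {γ : ℝ} (hγ : 1 < γ) {n : ℕ} (hn : 2 ≤ n) {ψ : ℕ → ℝ}
    (hψ : IsDiscreteProfile γ 0 0 n ψ) : ∀ x ∈ Finset.Icc 1 (n - 1), ψ x = 0 := by
  intro x hx
  have h1 := profile_le_max 0 0 hγ n hn ψ hψ x hx
  have h2 := profile_ge_min 0 0 hγ n hn ψ hψ x hx
  simp at h1 h2
  linarith

def extFin (n : ℕ) (v : ↥(Finset.Icc 1 (n - 1)) → ℝ) (m : ℕ) : ℝ :=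
  if h : m ∈ Finset.Icc 1 (n - 1) then v ⟨m, h⟩ else 0

lemma extFin_apply (n : ℕ) (v : ↥(Finset.Icc 1 (n - 1)) → ℝ) {m : ℕ}
    (h : m ∈ Finset.Icc 1 (n - 1)) : extFin n v m = v ⟨m, h⟩ := dif_pos h

def matA (γ : ℝ) (n : ℕ) :
    Matrix ↥(Finset.Icc 1 (n - 1)) ↥(Finset.Icc 1 (n - 1)) ℝ := fun x y =>
  pker γ (((y : ℕ) : ℝ) - ((x : ℕ) : ℝ)) -
    (if y = x then
      ((∑ z ∈ Finset.Icc 1 (n - 1), pker γ ((z : ℝ) - ((x : ℕ) : ℝ)))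
        + (if (x : ℕ) = 1 then 1 else 0) + (if (x : ℕ) = n - 1 then 1 else 0))
    else 0)

lemma bridge (γ : ℝ) (n : ℕ) (v : ↥(Finset.Icc 1 (n - 1)) → ℝ) (x : ℕ)
    (hx : x ∈ Finset.Icc 1 (n - 1)) :
    (matA γ n).mulVec v ⟨x, hx⟩
      = (∑ y ∈ Finset.Icc 1 (n - 1),
          pker γ ((y : ℝ) - (x : ℝ)) * (extFin n v y - extFin n v x))
        + (if x = 1 then -(extFin n v 1) else 0)
        + (if x = n - 1 then -(extFin n v (n - 1)) else 0) := by
  classical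
  have hx1 : extFin n v x = v ⟨x, hx⟩ := extFin_apply n v hx
  have hmv : (matA γ n).mulVec v ⟨x, hx⟩
      = ∑ y : ↥(Finset.Icc 1 (n - 1)), matA γ n ⟨x, hx⟩ y * v y := by
    simp [Matrix.mulVec, dotProduct]
  rw [hmv]
  simp only [matA, sub_mul]
  rw [Finset.sum_sub_distrib]
  have conv1 : (∑ y : ↥(Finset.Icc 1 (n - 1)),
      pker γ (((y : ℕ) : ℝ) - ((x : ℕ) : ℝ)) * v y)
      = ∑ m ∈ Finset.Icc 1 (n - 1), pker γ ((m : ℝ) - (x : ℝ)) * extFin n v m := by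
    rw [← Finset.sum_coe_sort (Finset.Icc 1 (n - 1))
      (fun m => pker γ ((m : ℝ) - (x : ℝ)) * extFin n v m)]
    exact Finset.sum_congr rfl (fun y _ => by rw [extFin_apply n v y.2])
  have conv2 : (∑ y : ↥(Finset.Icc 1 (n - 1)),
      (if y = ⟨x, hx⟩ then
        ((∑ z ∈ Finset.Icc 1 (n - 1), pker γ ((z : ℝ) - ((x : ℕ) : ℝ)))
          + (if (x : ℕ) = 1 then (1:ℝ) else 0) + (if (x : ℕ) = n - 1 then 1 else 0))
      else 0) * v y)
      = ((∑ z ∈ Finset.Icc 1 (n - 1), pker γ ((z : ℝ) - (x : ℝ)))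
          + (if x = 1 then (1:ℝ) else 0) + (if x = n - 1 then 1 else 0)) * v ⟨x, hx⟩ := by
    simp only [ite_mul, zero_mul]
    rw [Finset.sum_ite_eq' Finset.univ (⟨x, hx⟩ : ↥(Finset.Icc 1 (n - 1)))]
    simp
  rw [conv1, conv2]
  have conv3 : (∑ y ∈ Finset.Icc 1 (n - 1),
        pker γ ((y : ℝ) - (x : ℝ)) * (extFin n v y - extFin n v x))
      = (∑ m ∈ Finset.Icc 1 (n - 1), pker γ ((m : ℝ) - (x : ℝ)) * extFin n v m)
        - (∑ z ∈ Finset.Icc 1 (n - 1), pker γ ((z : ℝ) - (x : ℝ))) * extFin n v x := by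
    rw [Finset.sum_mul, ← Finset.sum_sub_distrib]
    exact Finset.sum_congr rfl (fun m _ => by ring)
  rw [conv3, hx1]
  have hb1 : (if x = 1 then -(extFin n v 1) else 0)
      = -((if x = 1 then (1:ℝ) else 0) * v ⟨x, hx⟩) := by
    by_cases h : x = 1
    · rw [if_pos h, if_pos h]; subst h; rw [hx1]; ring
    · rw [if_neg h, if_neg h]; ring
  have hb2 : (if x = n - 1 then -(extFin n v (n - 1)) else 0)
      = -((if x = n - 1 then (1:ℝ) else 0) * v ⟨x, hx⟩) := by
    by_cases h : x = n - 1
    · rw [if_pos h, if_pos h]; subst h; rw [hx1]; ring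
    · rw [if_neg h, if_neg h]; ring
  rw [hb1, hb2]
  ring

lemma profile_exists {γ : ℝ} (Φl Φr : ℝ) (hγ : 1 < γ) (n : ℕ) (hn : 2 ≤ n) :
    ∃ ψ : ℕ → ℝ, IsDiscreteProfile γ Φl Φr n ψ := by
  classical
  have hinj : Function.Injective (Matrix.mulVecLin (matA γ n)) := by
    rw [injective_iff_map_eq_zero]
    intro v hv
    have hprof : IsDiscreteProfile γ 0 0 n (extFin n v) := by
      intro x hx
      have hb := bridge γ n v x hx
      have h0 : (matA γ n).mulVec v ⟨x, hx⟩ = 0 := by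
        have := congrFun hv ⟨x, hx⟩
        simpa [Matrix.mulVecLin_apply] using this
      have e1 : (if x = 1 then (0:ℝ) - extFin n v 1 else 0)
          = (if x = 1 then -(extFin n v 1) else 0) := by split <;> ring
      have e2 : (if x = n - 1 then (0:ℝ) - extFin n v (n - 1) else 0)
          = (if x = n - 1 then -(extFin n v (n - 1)) else 0) := by split <;> ring
      rw [e1, e2, ← hb]
      exact h0
    funext y
    have := profile_zero_eq_zero hγ hn hprof y.1 y.2
    rw [extFin_apply n v y.2] at this
    simpa using this
  have hsurj := LinearMap.injective_iff_surjective.1 hinj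
  obtain ⟨v, hv⟩ := hsurj (fun x =>
    -((if (x : ℕ) = 1 then Φl else 0) + (if (x : ℕ) = n - 1 then Φr else 0)))
  refine ⟨extFin n v, ?_⟩
  intro x hx
  have hb := bridge γ n v x hx
  have hvx : (matA γ n).mulVec v ⟨x, hx⟩
      = -((if x = 1 then Φl else 0) + (if x = n - 1 then Φr else 0)) := by
    have := congrFun hv ⟨x, hx⟩
    simpa [Matrix.mulVecLin_apply] using this
  have e1 : (if x = 1 then Φl - extFin n v 1 else 0)
      = (if x = 1 then -(extFin n v 1) else 0) + (if x = 1 then Φl else 0) := by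
    split <;> ring
  have e2 : (if x = n - 1 then Φr - extFin n v (n - 1) else 0)
      = (if x = n - 1 then -(extFin n v (n - 1)) else 0)
        + (if x = n - 1 then Φr else 0) := by
    split <;> ring
  rw [e1, e2]
  rw [hvx] at hb
  linarith [hb]


/-- Existence and uniqueness of the discrete stationary profile on `Λ_n`,
together with the discrete maximum principle. -/
theorem discrete_profile_exists_unique
    (γ Φl Φr : ℝ) (hγ : γ ∈ Set.Ioo (1:ℝ) 2) (n : ℕ) (hn : 2 ≤ n) :
    ∃ ψ : ℕ → ℝ, IsDiscreteProfile γ Φl Φr n ψ ∧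
      (∀ x ∈ Finset.Icc 1 (n - 1), min Φl Φr ≤ ψ x ∧ ψ x ≤ max Φl Φr) ∧
      ∀ ψ' : ℕ → ℝ, IsDiscreteProfile γ Φl Φr n ψ' →
        ∀ x ∈ Finset.Icc 1 (n - 1), ψ' x = ψ x := by
  have hγ1 : 1 < γ := hγ.1
  obtain ⟨ψ, hψ⟩ := profile_exists Φl Φr hγ1 n hn
  refine ⟨ψ, hψ, fun x hx => ⟨profile_ge_min Φl Φr hγ1 n hn ψ hψ x hx,
    profile_le_max Φl Φr hγ1 n hn ψ hψ x hx⟩, ?_⟩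
  intro ψ' hψ' x hx
  have hd := profile_zero_eq_zero hγ1 hn (profile_diff hψ hψ') x hx
  have : ψ' x - ψ x = 0 := hd
  linarith
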